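/- Let 𝒜 be a complex unital Banach algebra, a, b ∈ 𝒜, and n ∈ ℕ. Then ‖ exp(a) · b · exp(−a) − Σ_{k=0}^n (1/k!) ad_a^k(b) ‖ ≤ ‖b‖ · (2‖a‖)^{n+1} · exp(2‖a‖) / (n+1)!. -/

import Mathlib

/-- Iterated adjoint action: `adIter a 0 b = b`, `adIter a (k+1) b = [a, adIter a k b]`. -/
def adIter {𝒜 : Type*} [Ring 𝒜] (a : 𝒜) : ℕ → 𝒜 → 𝒜
  | 0, b => b
  | k + 1, b => a * adIter a k b - adIter a k b * a

open Finset LinearMap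

lemma adIter_eq_sum {𝒜 : Type*} [NormedRing 𝒜] [NormedAlgebra ℂ 𝒜]
    (a b : 𝒜) (k : ℕ) :
    adIter a k b = ∑ i ∈ range (k + 1), k.choose i • (a ^ i * b * (-a) ^ (k - i)) := by
  have hend : adIter a k b = ((mulLeft ℂ a - mulRight ℂ a) ^ k) b := by
    induction k with
    | zero => simp [adIter]
    | succ k ih =>
      rw [pow_succ']
      simp only [adIter, ih, Module.End.mul_apply, LinearMap.sub_apply, mulLeft_apply,
        mulRight_apply]
  have hneg : mulRight ℂ (-a) = - mulRight ℂ a := by ext x; simp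
  rw [hend, sub_eq_add_neg, ← hneg, (LinearMap.commute_mulLeft_right a (-a)).add_pow]
  simp only [LinearMap.sum_apply, pow_mulLeft, pow_mulRight]
  refine Finset.sum_congr rfl fun i _ => ?_
  simp only [Module.End.mul_apply, mulLeft_apply, mulRight_apply, Module.End.natCast_apply]
  simp [mul_smul_comm, smul_mul_assoc, mul_assoc]

  rw [← mul_assoc, ← (Nat.cast_commute (k.choose i) (a ^ i)).eq, mul_assoc]

lemma adIter_norm_le {𝒜 : Type*} [NormedRing 𝒜] [NormedAlgebra ℂ 𝒜]
    (a b : 𝒜) (k : ℕ) : ‖adIter a k b‖ ≤ (2 * ‖a‖) ^ k * ‖b‖ := by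
  induction k with
  | zero => simp [adIter]
  | succ k ih =>
    have : ‖adIter a (k+1) b‖ ≤ 2 * ‖a‖ * ‖adIter a k b‖ := by
      show ‖a * adIter a k b - adIter a k b * a‖ ≤ _
      calc ‖a * adIter a k b - adIter a k b * a‖
          ≤ ‖a * adIter a k b‖ + ‖adIter a k b * a‖ := norm_sub_le _ _
        _ ≤ ‖a‖ * ‖adIter a k b‖ + ‖adIter a k b‖ * ‖a‖ :=
            add_le_add (norm_mul_le _ _) (norm_mul_le _ _)
        _ = 2 * ‖a‖ * ‖adIter a k b‖ := by ring
    calc ‖adIter a (k+1) b‖ ≤ 2 * ‖a‖ * ‖adIter a k b‖ := this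
      _ ≤ 2 * ‖a‖ * ((2 * ‖a‖) ^ k * ‖b‖) := by
          apply mul_le_mul_of_nonneg_left ih (by positivity)
      _ = (2 * ‖a‖) ^ (k+1) * ‖b‖ := by ring

lemma hadamard_hasSum {𝒜 : Type*} [NormedRing 𝒜] [NormedAlgebra ℂ 𝒜] [CompleteSpace 𝒜]
    (a b : 𝒜) :
    HasSum (fun k => ((k.factorial : ℂ))⁻¹ • adIter a k b)
      (NormedSpace.exp a * b * NormedSpace.exp (-a)) := by
  set f : ℕ → 𝒜 := fun i => ((i.factorial : ℂ))⁻¹ • a ^ i * b with hf_def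
  set g : ℕ → 𝒜 := fun j => ((j.factorial : ℂ))⁻¹ • (-a) ^ j with hg_def
  have hf : Summable fun i => ‖f i‖ := by
    apply Summable.of_nonneg_of_le (fun i => norm_nonneg _) (fun i => norm_mul_le _ _)
      ((NormedSpace.norm_expSeries_summable' (𝕂 := ℂ) a).mul_right ‖b‖)
  have hg : Summable fun j => ‖g j‖ := NormedSpace.norm_expSeries_summable' (𝕂 := ℂ) (-a)
  have hprod := tsum_mul_tsum_eq_tsum_sum_antidiagonal_of_summable_norm hf hg
  have hfs : ∑' i, f i = NormedSpace.exp a * b := by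
    rw [NormedSpace.exp_eq_tsum ℂ]
    exact (NormedSpace.expSeries_summable' (𝕂 := ℂ) a).tsum_mul_right b
  have hgs : ∑' j, g j = NormedSpace.exp (-a) := by rw [NormedSpace.exp_eq_tsum ℂ]
  have hterm : ∀ k, ∑ kl ∈ Finset.HasAntidiagonal.antidiagonal k, f kl.1 * g kl.2
      = ((k.factorial : ℂ))⁻¹ • adIter a k b := by
    intro k
    rw [Finset.Nat.sum_antidiagonal_eq_sum_range_succ_mk, adIter_eq_sum, Finset.smul_sum]
    refine Finset.sum_congr rfl fun i hi => ?_
    have hik : i ≤ k := Nat.lt_succ_iff.mp (Finset.mem_range.mp hi)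
    have hcoef : ((i.factorial : ℂ))⁻¹ * (((k - i).factorial : ℂ))⁻¹
        = ((k.factorial : ℂ))⁻¹ * (k.choose i : ℂ) := by
      have h := Nat.choose_mul_factorial_mul_factorial hik
      have hcc : ((k.choose i : ℂ)) * (i.factorial : ℂ) * ((k - i).factorial : ℂ)
          = (k.factorial : ℂ) := by exact_mod_cast congrArg (Nat.cast : ℕ → ℂ) h
      have h1 : (i.factorial : ℂ) ≠ 0 := Nat.cast_ne_zero.2 i.factorial_ne_zero
      have h2 : (((k - i).factorial : ℕ) : ℂ) ≠ 0 := Nat.cast_ne_zero.2 (k - i).factorial_ne_zero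
      have h3 : (k.factorial : ℂ) ≠ 0 := Nat.cast_ne_zero.2 k.factorial_ne_zero
      field_simp
      linear_combination -hcc
    show (((i.factorial : ℂ))⁻¹ • a ^ i * b) * (((((k - i)).factorial : ℂ))⁻¹ • (-a) ^ (k - i)) = _
    rw [smul_mul_assoc, smul_mul_smul_comm, hcoef, ← Nat.cast_smul_eq_nsmul ℂ, mul_smul,
      mul_assoc]
  have hsum : Summable fun k => ∑ kl ∈ Finset.HasAntidiagonal.antidiagonal k, f kl.1 * g kl.2 :=
    (summable_norm_sum_mul_antidiagonal_of_summable_norm hf hg).of_norm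
  have key : HasSum (fun k => ((k.factorial : ℂ))⁻¹ • adIter a k b)
      (∑' k, ∑ kl ∈ Finset.HasAntidiagonal.antidiagonal k, f kl.1 * g kl.2) := by
    simpa only [hterm] using hsum.hasSum
  rw [← hfs, ← hgs, hprod]
  exact (tsum_congr hterm) ▸ key

set_option maxHeartbeats 1000000 in
/-- quantitative Hadamard estimate in a complex Banach algebra:
`‖exp(a) b exp(-a) - ∑_{k=0}^n (1/k!) ad_a^k(b)‖ ≤ ‖b‖ (2‖a‖)^{n+1} exp(2‖a‖)/(n+1)!`. -/
theorem stmt_9 {𝒜 : Type*} [NormedRing 𝒜] [NormedAlgebra ℂ 𝒜] [CompleteSpace 𝒜]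
    (a b : 𝒜) (n : ℕ) :
    ‖NormedSpace.exp a * b * NormedSpace.exp (-a) -
        ∑ k ∈ Finset.range (n + 1), ((k.factorial : ℂ))⁻¹ • adIter a k b‖ ≤
      ‖b‖ * (2 * ‖a‖) ^ (n + 1) * Real.exp (2 * ‖a‖) / (n + 1).factorial := by
  set x := 2 * ‖a‖ with hx
  have hx0 : 0 ≤ x := by positivity
  set F : ℕ → 𝒜 := fun k => ((k.factorial : ℂ))⁻¹ • adIter a k b with hF
  have hsum := hadamard_hasSum a b
  have hFn : ∀ k, ‖F k‖ ≤ ‖b‖ * (x ^ k / k.factorial) := by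
    intro k
    show ‖((k.factorial : ℂ))⁻¹ • adIter a k b‖ ≤ _
    rw [norm_smul, norm_inv, Complex.norm_natCast]
    calc ((k.factorial : ℝ))⁻¹ * ‖adIter a k b‖
        ≤ ((k.factorial : ℝ))⁻¹ * (x ^ k * ‖b‖) :=
          mul_le_mul_of_nonneg_left (adIter_norm_le a b k) (by positivity)
      _ = ‖b‖ * (x ^ k / k.factorial) := by ring
  have hsx : Summable fun k : ℕ => x ^ k / k.factorial := by
    simpa using Real.summable_pow_div_factorial x
  have hFsummable : Summable fun k => ‖F k‖ :=
    Summable.of_nonneg_of_le (fun k => norm_nonneg _) hFn (hsx.mul_left ‖b‖)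
  have htail : NormedSpace.exp a * b * NormedSpace.exp (-a)
      - ∑ k ∈ Finset.range (n + 1), F k = ∑' k, F (k + (n + 1)) := by
    rw [← hsum.tsum_eq, ← Summable.sum_add_tsum_nat_add (n + 1) hsum.summable, add_sub_cancel_left]
  have hshift : Summable fun k => ‖F (k + (n + 1))‖ :=
    (summable_nat_add_iff (n + 1)).2 hFsummable
  have hterm : ∀ k, ‖F (k + (n + 1))‖
      ≤ ‖b‖ * x ^ (n + 1) / (n + 1).factorial * (x ^ k / k.factorial) := by
    intro k
    refine (hFn _).trans ?_
    have hfac : ((k.factorial : ℝ)) * ((n + 1).factorial : ℝ)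
        ≤ ((k + (n + 1)).factorial : ℝ) := by
      exact_mod_cast Nat.le_of_dvd (Nat.factorial_pos _)
        (Nat.factorial_mul_factorial_dvd_factorial_add k (n + 1))
    calc ‖b‖ * (x ^ (k + (n + 1)) / (k + (n + 1)).factorial)
        ≤ ‖b‖ * (x ^ (k + (n + 1)) / ((k.factorial : ℝ) * ((n + 1).factorial : ℝ))) :=
          mul_le_mul_of_nonneg_left
            (div_le_div_of_nonneg_left (by positivity) (by positivity) hfac)
            (norm_nonneg b)
      _ = ‖b‖ * x ^ (n + 1) / (n + 1).factorial * (x ^ k / k.factorial) := by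
          rw [pow_add]
          field_simp
  have hexp : Real.exp x = ∑' k : ℕ, x ^ k / k.factorial := by
    rw [Real.exp_eq_exp_ℝ, NormedSpace.exp_eq_tsum_div]
  rw [htail]
  refine le_trans (norm_tsum_le_tsum_norm hshift) ?_
  refine le_trans (Summable.tsum_le_tsum hterm hshift (hsx.mul_left _)) ?_
  rw [tsum_mul_left, ← hexp]
  exact le_of_eq (by ring)
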